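/- The multiset of eigenvalues of the Hermitian adjacency matrix of the mixed cycle C_n^1 (the n-cycle with exactly one directed edge, all other edges undirected) is {2·cos((2k+1)π/(2n)) : k = 0, 1, …, n−1}. -/

import Mathlib

open Polynomial Matrix Finset

noncomputable def psiR (n k : ℕ) : ℝ := (2 * k + 1) * Real.pi / (2 * n)

noncomputable def thetaR (n k : ℕ) : ℝ := (if Even k then 1 else -1) * psiR n k

noncomputable def xc (n k : ℕ) : ℂ := Complex.exp ((thetaR n k : ℂ) * Complex.I)

lemma xc_ne_zero (n k : ℕ) : xc n k ≠ 0 := Complex.exp_ne_zero _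

lemma exp_odd_pi_div_two (m : ℕ) :
    Complex.exp ((((2 * m + 1) * Real.pi / 2 : ℝ) : ℂ) * Complex.I)
      = Complex.I * (-1) ^ m := by
  have h : (((2 * m + 1) * Real.pi / 2 : ℝ) : ℂ) = ((Real.pi / 2 : ℝ) : ℂ) + m * (Real.pi : ℂ) := by
    push_cast; ring
  rw [h, add_mul, Complex.exp_add]
  have h1 : Complex.exp (((Real.pi / 2 : ℝ) : ℂ) * Complex.I) = Complex.I := by
    rw [Complex.exp_mul_I]
    push_cast
    simp [Complex.cos_pi_div_two, Complex.sin_pi_div_two]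
  have h2 : Complex.exp ((m : ℂ) * (Real.pi : ℂ) * Complex.I) = (-1) ^ m := by
    rw [mul_assoc, Complex.exp_nat_mul, Complex.exp_pi_mul_I]
  rw [h1, h2]

lemma xc_pow (n : ℕ) (hn : n ≠ 0) (k : ℕ) : xc n k ^ n = Complex.I := by
  have hn' : (n : ℝ) ≠ 0 := Nat.cast_ne_zero.mpr hn
  rw [xc, ← Complex.exp_nat_mul]
  by_cases hk : Even k
  · have hθ : (n : ℝ) * thetaR n k = (2 * k + 1) * Real.pi / 2 := by
      simp only [thetaR, psiR, if_pos hk, one_mul]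
      field_simp
    have : (n : ℂ) * ((thetaR n k : ℂ) * Complex.I)
        = (((2 * k + 1) * Real.pi / 2 : ℝ) : ℂ) * Complex.I := by
      rw [← hθ]; push_cast; ring
    rw [this, exp_odd_pi_div_two, Even.neg_one_pow hk, mul_one]
  · have hθ : (n : ℝ) * thetaR n k = -((2 * k + 1) * Real.pi / 2) := by
      simp only [thetaR, psiR, if_neg hk, neg_one_mul]
      field_simp
    have : (n : ℂ) * ((thetaR n k : ℂ) * Complex.I)
        = -((((2 * k + 1) * Real.pi / 2 : ℝ) : ℂ) * Complex.I) := by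
      rw [show -((((2 * k + 1) * Real.pi / 2 : ℝ) : ℂ) * Complex.I)
          = (((-((2 * k + 1) * Real.pi / 2) : ℝ)) : ℂ) * Complex.I by push_cast; ring, ← hθ]
      push_cast; ring
    rw [this, Complex.exp_neg, exp_odd_pi_div_two,
      Odd.neg_one_pow (Nat.odd_iff.mpr (Nat.not_even_iff.mp hk))]
    rw [mul_neg_one, inv_neg, Complex.inv_I, neg_neg]

lemma xc_inv (n k : ℕ) : (xc n k)⁻¹ = Complex.exp (-((thetaR n k : ℂ) * Complex.I)) := by
  rw [xc, ← Complex.exp_neg]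

lemma xc_add_inv (n k : ℕ) :
    xc n k + (xc n k)⁻¹ = ((2 * Real.cos (psiR n k) : ℝ) : ℂ) := by
  have hc : Real.cos (thetaR n k) = Real.cos (psiR n k) := by
    by_cases hk : Even k <;> simp [thetaR, hk, neg_one_mul, Real.cos_neg]
  have hcc : Complex.cos ((thetaR n k : ℝ) : ℂ) = ((Real.cos (psiR n k) : ℝ) : ℂ) := by
    rw [← Complex.ofReal_cos, hc]
  rw [xc_inv, xc, show -((thetaR n k : ℂ) * Complex.I) = (((-thetaR n k : ℝ)) : ℂ) * Complex.I by
    push_cast; ring, Complex.exp_mul_I, Complex.exp_mul_I]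
  push_cast
  rw [Complex.cos_neg, Complex.sin_neg, hcc, Complex.ofReal_cos]
  ring

lemma psi_pos (n k : ℕ) (hn : n ≠ 0) : 0 < psiR n k := by
  have : (0:ℝ) < n := by positivity
  have := Real.pi_pos
  apply div_pos <;> positivity

lemma psi_lt_pi (n k : ℕ) (hk : k < n) : psiR n k < Real.pi := by
  have hn : (0:ℝ) < 2 * n := by
    have : (0:ℝ) < n := by exact_mod_cast (by omega : 0 < n)
    linarith
  have hπ := Real.pi_pos
  rw [psiR, div_lt_iff₀ hn]
  have : (2 * (k:ℝ) + 1) < 2 * n := by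
    have : (k:ℝ) + 1 ≤ n := by exact_mod_cast hk
    linarith
  nlinarith

lemma theta_abs_lt (n k : ℕ) (hk : k < n) : |thetaR n k| < Real.pi := by
  have h1 := psi_pos n k (by omega)
  have h2 := psi_lt_pi n k hk
  rw [thetaR]
  by_cases hkk : Even k <;> simp [hkk, abs_lt, neg_one_mul] <;> constructor <;> linarith

lemma xc_inj (n : ℕ) {k l : ℕ} (hk : k < n) (hl : l < n) (h : xc n k = xc n l) : k = l := by
  obtain ⟨m, hm⟩ := Complex.exp_eq_exp_iff_exists_int.mp h
  have hmc : ((thetaR n k : ℝ) : ℂ) = ((thetaR n l + m * (2 * Real.pi) : ℝ) : ℂ) := by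
    apply mul_right_cancel₀ Complex.I_ne_zero
    push_cast
    linear_combination hm
  have hm' : thetaR n k = thetaR n l + m * (2 * Real.pi) := by exact_mod_cast hmc
  have hbk := theta_abs_lt n k hk
  have hbl := theta_abs_lt n l hl
  have hπ := Real.pi_pos
  rw [abs_lt] at hbk hbl
  have hm0 : m = 0 := by
    rcases lt_trichotomy m 0 with h' | h' | h'
    · have h1' : m + 1 ≤ 0 := Int.lt_iff_add_one_le.mp h'
      have h2' : (m:ℝ) + 1 ≤ 0 := by exact_mod_cast h1'
      nlinarith
    · exact h'
    · have : (1:ℝ) ≤ m := by exact_mod_cast h'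
      nlinarith
  rw [hm0] at hm'
  simp at hm'
  -- now thetaR n k = thetaR n l
  have h1 := psi_pos n k (by omega)
  have h2 := psi_pos n l (by omega)
  have hπn : (0:ℝ) < 2 * n := by
    have : (0:ℝ) < n := by exact_mod_cast (by omega : 0 < n)
    linarith
  by_cases hke : Even k <;> by_cases hle : Even l <;>
    simp [thetaR, hke, hle, neg_one_mul] at hm' <;>
    [skip; (exfalso; linarith); (exfalso; linarith); skip] <;>
  · have : (2 * (k:ℝ) + 1) * Real.pi = (2 * l + 1) * Real.pi := by
      have := hm'
      rw [psiR, psiR, div_eq_div_iff (ne_of_gt hπn) (ne_of_gt hπn)] at this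
      nlinarith
    have : (k:ℝ) = l := by
      have := mul_right_cancel₀ (ne_of_gt Real.pi_pos) this
      linarith
    exact_mod_cast this

/-- conjugation by an invertible matrix preserves the characteristic polynomial -/
lemma charpoly_conj {n : ℕ} (P A : Matrix (Fin n) (Fin n) ℂ) (h : IsUnit P.det) :
    (P * A * P⁻¹).charpoly = A.charpoly := by
  have hPP : P * P⁻¹ = 1 := Matrix.mul_nonsing_inv P h
  have key : charmatrix (P * A * P⁻¹)
      = (P.map C) * charmatrix A * ((P⁻¹).map C) := by
    rw [charmatrix, charmatrix, Matrix.mul_sub, Matrix.sub_mul]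
    congr 1
    · have hcomm : Matrix.scalar (Fin n) (X : ℂ[X]) * (P.map C) = (P.map C) * Matrix.scalar (Fin n) (X : ℂ[X]) :=
        ((Matrix.scalar_commute (X : ℂ[X]) (fun r => Commute.all _ _) (P.map C)).eq)
      rw [← hcomm, Matrix.mul_assoc, ← Matrix.map_mul, hPP]
      simp
    · simp only [RingHom.mapMatrix_apply]
      rw [← Matrix.map_mul, ← Matrix.map_mul]
  rw [Matrix.charpoly, Matrix.charpoly, key, Matrix.det_mul, Matrix.det_mul]
  have : (P.map C).det * ((P⁻¹).map C).det = 1 := by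
    rw [← Matrix.det_mul, ← Matrix.map_mul, hPP]
    simp
  calc (P.map C).det * (charmatrix A).det * ((P⁻¹).map C).det
      = (charmatrix A).det * ((P.map C).det * ((P⁻¹).map C).det) := by ring
    _ = (charmatrix A).det := by rw [this, mul_one]

lemma charpoly_diag {n : ℕ} (d : Fin n → ℂ) :
    (Matrix.diagonal d).charpoly = ∏ k : Fin n, (X - C (d k)) := by
  have : charmatrix (Matrix.diagonal d) = Matrix.diagonal (fun k => X - C (d k)) := by
    ext i j
    by_cases h : i = j <;> simp [charmatrix_apply, Matrix.diagonal_apply, h]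
  rw [Matrix.charpoly, this, Matrix.det_diagonal]

/-- The Hermitian adjacency matrix of the mixed cycle `C_n^1`: the `n`-cycle with
all edges undirected except one directed edge from `v_n` to `v_1`. -/
def C1mat (n : ℕ) : Matrix (Fin n) (Fin n) ℂ :=
  Matrix.of fun i j =>
    if (i : ℕ) = n - 1 ∧ (j : ℕ) = 0 then Complex.I
    else if (i : ℕ) = 0 ∧ (j : ℕ) = n - 1 then -Complex.I
    else if (i : ℕ) + 1 = (j : ℕ) ∨ (j : ℕ) + 1 = (i : ℕ) then 1 else 0

noncomputable def Vmat (n : ℕ) : Matrix (Fin n) (Fin n) ℂ :=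
  Matrix.of fun j k : Fin n => xc n k ^ (j : ℕ)

lemma Vmat_det_ne_zero (n : ℕ) (hn : 3 ≤ n) : (Vmat n).det ≠ 0 := by
  have hV : Vmat n = (Matrix.vandermonde fun k : Fin n => xc n (k : ℕ))ᵀ := by
    ext j k
    simp [Vmat, Matrix.vandermonde, Matrix.transpose_apply]
  rw [hV, Matrix.det_transpose, Matrix.det_vandermonde]
  rw [Finset.prod_ne_zero_iff]
  intro i _
  rw [Finset.prod_ne_zero_iff]
  intro j hj
  rw [Finset.mem_Ioi] at hj
  apply sub_ne_zero.mpr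
  intro h
  have := xc_inj n j.isLt i.isLt h
  omega

lemma C1_mul_V (n : ℕ) (hn : 3 ≤ n) :
    C1mat n * Vmat n
      = Vmat n * Matrix.diagonal (fun k : Fin n => xc n (k : ℕ) + (xc n (k : ℕ))⁻¹) := by
  ext r k
  rw [Matrix.mul_apply, Matrix.mul_diagonal]
  set x : ℂ := xc n (k : ℕ) with hxdef
  have hx : x ≠ 0 := xc_ne_zero n k
  have hxn : x ^ n = Complex.I := xc_pow n (by omega) k
  have hr := r.isLt
  have hVrk : Vmat n r k = x ^ (r : ℕ) := rfl
  rw [hVrk]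
  by_cases hr0 : (r : ℕ) = 0
  · -- row 0
    have key : ∀ j : Fin n, C1mat n r j * (Vmat n j k) =
        (if j = (⟨1, by omega⟩ : Fin n) then x ^ (j : ℕ) else 0)
          + (if j = (⟨n - 1, by omega⟩ : Fin n) then -Complex.I * x ^ (j : ℕ) else 0) := by
      intro j
      have hj := j.isLt
      have hVjk : Vmat n j k = x ^ (j : ℕ) := rfl
      rw [hVjk]
      simp only [C1mat, Matrix.of_apply, Fin.ext_iff]
      split_ifs <;> first | ring1 | (exfalso; omega)
    rw [Finset.sum_congr rfl (fun j _ => key j), Finset.sum_add_distrib,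
      Finset.sum_ite_eq' Finset.univ, Finset.sum_ite_eq' Finset.univ]
    simp only [Finset.mem_univ, if_true]
    have h1 : x ^ (n - 1) * x = x ^ n := by
      rw [← pow_succ]; congr 1; omega
    have h2 : -Complex.I * x ^ (n - 1) = x⁻¹ := by
      apply eq_inv_of_mul_eq_one_left
      rw [mul_assoc, h1, hxn]
      simp [Complex.I_mul_I]
    rw [hr0, h2]
    simp [pow_one]
  · by_cases hr1 : (r : ℕ) = n - 1
    · -- row n-1
      have key : ∀ j : Fin n, C1mat n r j * (Vmat n j k) =
          (if j = (⟨0, by omega⟩ : Fin n) then Complex.I * x ^ (j : ℕ) else 0)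
            + (if j = (⟨n - 2, by omega⟩ : Fin n) then x ^ (j : ℕ) else 0) := by
        intro j
        have hj := j.isLt
        have hVjk : Vmat n j k = x ^ (j : ℕ) := rfl
        rw [hVjk]
        simp only [C1mat, Matrix.of_apply, Fin.ext_iff]
        split_ifs <;> first | ring1 | (exfalso; omega)
      rw [Finset.sum_congr rfl (fun j _ => key j), Finset.sum_add_distrib,
        Finset.sum_ite_eq' Finset.univ, Finset.sum_ite_eq' Finset.univ]
      simp only [Finset.mem_univ, if_true]
      have h1 : x ^ (n - 2) * x = x ^ (n - 1) := by
        rw [← pow_succ]; congr 1; omega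
      have h2 : x ^ (n - 1) * x = x ^ n := by
        rw [← pow_succ]; congr 1; omega
      have h3 : x ^ (n - 1) * x⁻¹ = x ^ (n - 2) := by
        rw [← h1, mul_assoc, mul_inv_cancel₀ hx, mul_one]
      rw [hr1, mul_add, h2, hxn, h3]
      simp
    · -- interior rows
      have hrr : 1 ≤ (r : ℕ) ∧ (r : ℕ) ≤ n - 2 := by omega
      have key : ∀ j : Fin n, C1mat n r j * (Vmat n j k) =
          (if j = (⟨(r : ℕ) - 1, by omega⟩ : Fin n) then x ^ (j : ℕ) else 0)
            + (if j = (⟨(r : ℕ) + 1, by omega⟩ : Fin n) then x ^ (j : ℕ) else 0) := by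
        intro j
        have hj := j.isLt
        have hVjk : Vmat n j k = x ^ (j : ℕ) := rfl
        rw [hVjk]
        simp only [C1mat, Matrix.of_apply, Fin.ext_iff]
        split_ifs <;> first | ring1 | (exfalso; omega)
      rw [Finset.sum_congr rfl (fun j _ => key j), Finset.sum_add_distrib,
        Finset.sum_ite_eq' Finset.univ, Finset.sum_ite_eq' Finset.univ]
      simp only [Finset.mem_univ, if_true]
      have h1 : x ^ ((r : ℕ) - 1) * x = x ^ (r : ℕ) := by
        rw [← pow_succ]; congr 1; omega
      have h2 : x ^ (r : ℕ) * x = x ^ ((r : ℕ) + 1) := by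
        rw [← pow_succ]
      have h3 : x ^ (r : ℕ) * x⁻¹ = x ^ ((r : ℕ) - 1) := by
        rw [← h1, mul_assoc, mul_inv_cancel₀ hx, mul_one]
      rw [mul_add, h2, h3]
      ring

/-- The Hermitian spectrum of `C_n^1` is `{2 cos((2k+1)π/(2n)) : k = 0,…,n−1}`. -/
theorem spectrum_C1 (n : ℕ) (hn : 3 ≤ n) (hH : (C1mat n).IsHermitian) :
    Multiset.map hH.eigenvalues Finset.univ.val =
      (Finset.range n).val.map
        (fun k => 2 * Real.cos ((2 * k + 1) * Real.pi / (2 * n))) := by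
  classical
  have hVd : IsUnit (Vmat n).det := isUnit_iff_ne_zero.mpr (Vmat_det_ne_zero n hn)
  have hVinv : Vmat n * (Vmat n)⁻¹ = 1 := Matrix.mul_nonsing_inv _ hVd
  -- similarity to the diagonal matrix of cosine values
  have hsim : C1mat n
      = Vmat n * Matrix.diagonal (fun k : Fin n => xc n (k : ℕ) + (xc n (k : ℕ))⁻¹) * (Vmat n)⁻¹ := by
    rw [← C1_mul_V n hn, Matrix.mul_assoc, hVinv, Matrix.mul_one]
  have hcp1 : (C1mat n).charpoly
      = ∏ k : Fin n, (X - C (((2 * Real.cos (psiR n (k : ℕ)) : ℝ) : ℂ))) := by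
    rw [hsim, charpoly_conj _ _ hVd, charpoly_diag]
    apply Finset.prod_congr rfl
    intro k _
    rw [xc_add_inv]
  -- spectral theorem side
  have hspec := hH.spectral_theorem
  set U : Matrix (Fin n) (Fin n) ℂ := (hH.eigenvectorUnitary : Matrix (Fin n) (Fin n) ℂ) with hUdef
  have hUU : U * star U = 1 := Matrix.mem_unitaryGroup_iff.mp hH.eigenvectorUnitary.2
  have hUinv : U⁻¹ = star U := Matrix.inv_eq_right_inv hUU
  have hUd : IsUnit U.det := by
    apply IsUnit.of_mul_eq_one (star U).det
    rw [← Matrix.det_mul, hUU, Matrix.det_one]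
  have hcp2 : (C1mat n).charpoly
      = ∏ k : Fin n, (X - C ((hH.eigenvalues k : ℝ) : ℂ)) := by
    conv_lhs => rw [hspec]
    rw [Unitary.conjStarAlgAut_apply]
    rw [← hUinv, charpoly_conj _ _ hUd, charpoly_diag]
    exact Finset.prod_congr rfl fun k _ => rfl
  -- pass to multisets of roots
  have hprod :
      ((Finset.univ.val.map fun k : Fin n => ((hH.eigenvalues k : ℝ) : ℂ)).map
          fun a => X - C a).prod
        = (((Finset.range n).val.map fun k : ℕ => ((2 * Real.cos (psiR n k) : ℝ) : ℂ)).map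
          fun a => X - C a).prod := by
    rw [Multiset.map_map, Multiset.map_map]
    simp only [Function.comp]
    rw [← Finset.prod_eq_multiset_prod, ← Finset.prod_eq_multiset_prod, ← hcp2, hcp1]
    exact Fin.prod_univ_eq_prod_range
      (fun k => (X - C (((2 * Real.cos (psiR n k) : ℝ) : ℂ)))) n
  have hroots :
      (Finset.univ.val.map fun k : Fin n => ((hH.eigenvalues k : ℝ) : ℂ))
        = ((Finset.range n).val.map fun k : ℕ => ((2 * Real.cos (psiR n k) : ℝ) : ℂ)) := by
    have h1 := Polynomial.roots_multiset_prod_X_sub_C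
      (Finset.univ.val.map fun k : Fin n => ((hH.eigenvalues k : ℝ) : ℂ))
    have h2 := Polynomial.roots_multiset_prod_X_sub_C
      ((Finset.range n).val.map fun k : ℕ => ((2 * Real.cos (psiR n k) : ℝ) : ℂ))
    rw [← h1, ← h2, hprod]
  apply Multiset.map_injective Complex.ofReal_injective
  rw [Multiset.map_map, Multiset.map_map]
  convert hroots using 2
  all_goals simp [psiR, Function.comp]
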